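/- Let κ ≥ 3 be a cardinal and let α ≥ 1 be a countable ordinal. Then the metric space (T_κ^{[α]}, d) is not complete. More precisely, there exists a Cauchy sequence (a_n)_{n∈ℕ} in T_κ^{[α]} whose limit a in T_κ satisfies comp(a) = α + 1, so a ∉ T_κ^{[α]}. -/

import Mathlib

open Set Filter

noncomputable section

/-- `C` is a valid label set for the valence cardinal `κ`:
`|C| = κ` if `κ` is infinite and `|C| + 1 = κ` (i.e. `|C| = κ - 1`) if `κ` is finite. -/
def IsLabelSet (κ : Cardinal) (C : Type) : Prop :=
  (Cardinal.aleph0 ≤ κ → Cardinal.mk C = κ) ∧ (κ < Cardinal.aleph0 → Cardinal.mk C + 1 = κ)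

/-- An ordinal is countable. -/
def IsCountableOrdinal (o : Ordinal) : Prop := o.card ≤ Cardinal.aleph0

/-- One-step Cantor–Bendixson derivative of a set: its non-isolated points. -/
def cbStep {X : Type*} [TopologicalSpace X] (A : Set X) : Set X :=
  {x | x ∈ A ∧ AccPt x (Filter.principal A)}

/-- The iterated Cantor–Bendixson derivative of a set. -/
def cbDeriv {X : Type*} [TopologicalSpace X] (A : Set X) (o : Ordinal) : Set X :=
  Ordinal.limitRecOn o A (fun _ ih => cbStep ih)
    (fun o _ ih => ⋂ (o' : Ordinal) (h : o' < o), ih o' h)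

/-- The Cantor–Bendixson rank of a set: the least ordinal `γ` such that the `(γ+1)`-st
Cantor–Bendixson derivative equals the `γ`-th one. -/
def cbRank {X : Type*} [TopologicalSpace X] (A : Set X) : Ordinal :=
  sInf {γ | cbDeriv A (γ + 1) = cbDeriv A γ}

theorem cbDeriv_zero {X : Type*} [TopologicalSpace X] (A : Set X) : cbDeriv A 0 = A :=
  Ordinal.limitRecOn_zero ..

theorem cbDeriv_one {X : Type*} [TopologicalSpace X] (A : Set X) :
    cbDeriv A 1 = cbStep A := by
  have : (1 : Ordinal) = Order.succ 0 := by
    rw [← Ordinal.add_one_eq_succ, zero_add]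
  rw [cbDeriv, this, Ordinal.limitRecOn_succ]
  rw [← cbDeriv, cbDeriv_zero]

theorem cbStep_empty {X : Type*} [TopologicalSpace X] : cbStep (∅ : Set X) = ∅ := by
  ext x; simp [cbStep]

theorem cbRank_empty {X : Type*} [TopologicalSpace X] : cbRank (∅ : Set X) = 0 := by
  refine le_antisymm ?_ zero_le
  refine csInf_le' ?_
  show cbDeriv (∅ : Set X) (0 + 1) = cbDeriv (∅ : Set X) 0
  rw [zero_add, cbDeriv_one, cbDeriv_zero, cbStep_empty]

/-- A point of Dyubina's universal real tree over the label set `C` (with distinguished label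
`z`): a function `(-∞, ρ) → C`, encoded as a total function on `ℝ` which takes the value `z`
on `[ρ, ∞)`, which is eventually `z` near `-∞` and piecewise constant from the right. -/
structure UTree (C : Type) (z : C) where
  ρ : ℝ
  f : ℝ → C
  apply_eq_of_ge : ∀ t, ρ ≤ t → f t = z
  eventually_zero : ∃ s, s ≤ ρ ∧ ∀ t, t < s → f t = z
  piecewise_const : ∀ t, t < ρ → ∃ ε > 0, ∀ u, t ≤ u → u ≤ t + ε → u < ρ → f u = f t

namespace UTree

variable {C : Type} {z : C}

theorem ext' {a b : UTree C z} (h1 : a.ρ = b.ρ) (h2 : a.f = b.f) : a = b := by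
  cases a; cases b; cases h1; cases h2; rfl

/-- The partial order `⪯` : `a ⪯ b` iff `a` is the restriction of `b` to `(-∞, ρ_a)`. -/
protected def le (a b : UTree C z) : Prop :=
  a.ρ ≤ b.ρ ∧ ∀ t, t < a.ρ → a.f t = b.f t

/-- The strict order `≺`. -/
protected def lt (a b : UTree C z) : Prop := a.le b ∧ a ≠ b

/-- The set of times up to which `a` and `b` agree. -/
def agreeSet (a b : UTree C z) : Set ℝ :=
  {t | t ≤ min a.ρ b.ρ ∧ ∀ u, u < t → a.f u = b.f u}

theorem agreeSet_nonempty (a b : UTree C z) : (agreeSet a b).Nonempty := by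
  obtain ⟨s₁, hs₁, h₁⟩ := a.eventually_zero
  obtain ⟨s₂, hs₂, h₂⟩ := b.eventually_zero
  refine ⟨min s₁ s₂, le_min ((min_le_left _ _).trans hs₁) ((min_le_right _ _).trans hs₂), ?_⟩
  intro u hu
  rw [h₁ u (lt_of_lt_of_le hu (min_le_left _ _)), h₂ u (lt_of_lt_of_le hu (min_le_right _ _))]

theorem agreeSet_bddAbove (a b : UTree C z) : BddAbove (agreeSet a b) :=
  ⟨min a.ρ b.ρ, fun _ ht => ht.1⟩

/-- `ρ_{a ∧ b}`, the height of the wedge of `a` and `b`. -/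
def wedgeρ (a b : UTree C z) : ℝ := sSup (agreeSet a b)

theorem wedgeρ_le_min (a b : UTree C z) : wedgeρ a b ≤ min a.ρ b.ρ :=
  csSup_le (agreeSet_nonempty a b) fun _ ht => ht.1

theorem agree_of_lt_wedgeρ (a b : UTree C z) {u : ℝ} (hu : u < wedgeρ a b) :
    a.f u = b.f u := by
  obtain ⟨t, ht, hut⟩ := exists_lt_of_lt_csSup (agreeSet_nonempty a b) hu
  exact ht.2 u hut

theorem le_wedgeρ {a b : UTree C z} {t : ℝ} (ht : t ∈ agreeSet a b) : t ≤ wedgeρ a b :=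
  le_csSup (agreeSet_bddAbove a b) ht

theorem wedgeρ_comm (a b : UTree C z) : wedgeρ a b = wedgeρ b a := by
  unfold wedgeρ agreeSet
  congr 1
  ext t
  constructor <;> rintro ⟨h1, h2⟩ <;>
    exact ⟨by rwa [min_comm], fun u hu => (h2 u hu).symm⟩

theorem wedgeρ_self (a : UTree C z) : wedgeρ a a = a.ρ := by
  refine le_antisymm ((wedgeρ_le_min a a).trans (by simp)) ?_
  exact le_wedgeρ ⟨by simp, fun _ _ => rfl⟩

/-- Restriction of `a` to `(-∞, s)` for `s ≤ ρ_a`. -/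
def restrict (a : UTree C z) (s : ℝ) (hs : s ≤ a.ρ) : UTree C z where
  ρ := s
  f := fun t => if t < s then a.f t else z
  apply_eq_of_ge := fun t ht => by
    show (if t < s then a.f t else z) = z
    rw [if_neg (not_lt.mpr ht)]
  eventually_zero := by
    obtain ⟨s', hs', h'⟩ := a.eventually_zero
    refine ⟨min s' s, min_le_right _ _, fun t ht => ?_⟩
    show (if t < s then a.f t else z) = z
    by_cases h : t < s
    · rw [if_pos h]; exact h' t (lt_of_lt_of_le ht (min_le_left _ _))
    · rw [if_neg h]
  piecewise_const := fun t ht => by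
    obtain ⟨ε, hε, h⟩ := a.piecewise_const t (lt_of_lt_of_le ht hs)
    refine ⟨ε, hε, fun u hu1 hu2 hu3 => ?_⟩
    show (if u < s then a.f u else z) = (if t < s then a.f t else z)
    rw [if_pos hu3, if_pos ht]
    exact h u hu1 hu2 (lt_of_lt_of_le hu3 hs)

/-- The wedge `a ∧ b`: the restriction of `a` to `(-∞, ρ_{a ∧ b})`. -/
def wedge (a b : UTree C z) : UTree C z :=
  a.restrict (wedgeρ a b) ((wedgeρ_le_min a b).trans (min_le_left _ _))

theorem min_wedgeρ_le (a b c : UTree C z) :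
    min (wedgeρ a b) (wedgeρ b c) ≤ wedgeρ a c := by
  refine le_wedgeρ ⟨le_min ?_ ?_, fun u hu => ?_⟩
  · exact (min_le_left _ _).trans ((wedgeρ_le_min a b).trans (min_le_left _ _))
  · exact (min_le_right _ _).trans ((wedgeρ_le_min b c).trans (min_le_right _ _))
  · have h1 : a.f u = b.f u :=
      agree_of_lt_wedgeρ a b (lt_of_lt_of_le hu (min_le_left _ _))
    have h2 : b.f u = c.f u :=
      agree_of_lt_wedgeρ b c (lt_of_lt_of_le hu (min_le_right _ _))
    exact h1.trans h2

/-- The metric `d(a,b) = ρ_a + ρ_b - 2 ρ_{a ∧ b}` on the universal real tree. -/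
instance : MetricSpace (UTree C z) where
  dist a b := a.ρ + b.ρ - 2 * wedgeρ a b
  dist_self a := by simp [wedgeρ_self]; ring
  dist_comm a b := by simp only [wedgeρ_comm a b]; ring
  dist_triangle a b c := by
    have hmin := min_wedgeρ_le a b c
    have h1 : wedgeρ a b ≤ b.ρ := (wedgeρ_le_min a b).trans (min_le_right _ _)
    have h2 : wedgeρ b c ≤ b.ρ := (wedgeρ_le_min b c).trans (min_le_left _ _)
    rcases min_cases (wedgeρ a b) (wedgeρ b c) with ⟨heq, hle⟩ | ⟨heq, hle⟩ <;>
      (rw [heq] at hmin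
       show a.ρ + c.ρ - 2 * wedgeρ a c ≤ a.ρ + b.ρ - 2 * wedgeρ a b + (b.ρ + c.ρ - 2 * wedgeρ b c)
       linarith)
  eq_of_dist_eq_zero := by
    intro a b h
    have h1 : wedgeρ a b ≤ a.ρ := (wedgeρ_le_min a b).trans (min_le_left _ _)
    have h2 : wedgeρ a b ≤ b.ρ := (wedgeρ_le_min a b).trans (min_le_right _ _)
    have hd : a.ρ + b.ρ - 2 * wedgeρ a b = 0 := h
    have ha : a.ρ = wedgeρ a b := by linarith
    have hb : b.ρ = wedgeρ a b := by linarith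
    refine ext' (ha.trans hb.symm) (funext fun t => ?_)
    by_cases ht : t < wedgeρ a b
    · exact agree_of_lt_wedgeρ a b ht
    · rw [a.apply_eq_of_ge t (ha.le.trans (not_lt.mp ht)),
        b.apply_eq_of_ge t (hb.le.trans (not_lt.mp ht))]

theorem dist_def (a b : UTree C z) : dist a b = a.ρ + b.ρ - 2 * wedgeρ a b := rfl

/-- The point `c_ℓ`: the constant function `(-∞, ℓ) → C` with value `z`. -/
def cconst (ℓ : ℝ) : UTree C z where
  ρ := ℓ
  f := fun _ => z
  apply_eq_of_ge := fun _ _ => rfl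
  eventually_zero := ⟨ℓ, le_refl ℓ, fun _ _ => rfl⟩
  piecewise_const := fun _ _ => ⟨1, one_pos, fun _ _ _ _ => rfl⟩

/-- The set of points at which `a` is locally non-constant from the left, whose closure is the
set `P_a`. -/
def badSet (a : UTree C z) : Set ℝ :=
  {t | t < a.ρ ∧ ∀ ε > 0, ∃ u ∈ Icc (t - ε) t, ∃ v ∈ Icc (t - ε) t, a.f u ≠ a.f v}

/-- The set `P_a`. -/
def Pset (a : UTree C z) : Set ℝ := closure (badSet a)

/-- The complexity of `a`: the Cantor–Bendixson rank of `P_a`. -/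
def comp (a : UTree C z) : Ordinal := cbRank (Pset a)

/-- The complexity of a pair `a ≺ b`: the Cantor–Bendixson rank of `P_b ∩ [ρ_a, ρ_b]`. -/
def pairComp (a b : UTree C z) : Ordinal := cbRank (Pset b ∩ Icc a.ρ b.ρ)

/-- `τ_a`: the maximum of all `s ≤ ρ_a` such that `a` is `z` below `s`. -/
def tau (a : UTree C z) : ℝ := sSup {s | s ≤ a.ρ ∧ ∀ t, t < s → a.f t = z}

/-- The tree `T_κ^{[α]}` of points of complexity at most `α`. -/
def level (z : C) (α : Ordinal) : Set (UTree C z) := {a | comp a ≤ α}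

theorem Pset_cconst (ℓ : ℝ) : Pset (cconst ℓ : UTree C z) = ∅ := by
  have : badSet (cconst ℓ : UTree C z) = ∅ := by
    ext t
    simp only [badSet, mem_setOf_eq, mem_empty_iff_false, iff_false, not_and]
    intro _
    push_neg
    exact ⟨1, one_pos, fun u _ v _ => rfl⟩
  rw [Pset, this, closure_empty]

theorem comp_cconst (ℓ : ℝ) : comp (cconst ℓ : UTree C z) = 0 := by
  rw [comp, Pset_cconst, cbRank_empty]

theorem cconst_mem_level {ℓ : ℝ} (α : Ordinal) : (cconst ℓ : UTree C z) ∈ level z α := by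
  show comp _ ≤ α
  rw [comp_cconst]
  exact zero_le

/-- The canonical line `L_0 = {c_ℓ : ℓ ∈ ℝ}`. -/
def L0 (z : C) : Set (UTree C z) := Set.range fun ℓ => (cconst ℓ : UTree C z)

/-- The extension of `a` by the label `c` on `[ρ_a, ρ_a + 1)`. -/
def extend (a : UTree C z) (c : C) : UTree C z where
  ρ := a.ρ + 1
  f := fun t => if t < a.ρ then a.f t else if t < a.ρ + 1 then c else z
  apply_eq_of_ge := fun t ht => by
    show (if t < a.ρ then a.f t else if t < a.ρ + 1 then c else z) = z
    rw [if_neg (not_lt.mpr (by linarith)), if_neg (not_lt.mpr ht)]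
  eventually_zero := by
    obtain ⟨s, hs, h⟩ := a.eventually_zero
    refine ⟨min s a.ρ, by have := min_le_right s a.ρ; linarith, fun t ht => ?_⟩
    show (if t < a.ρ then a.f t else if t < a.ρ + 1 then c else z) = z
    rw [if_pos (lt_of_lt_of_le ht (min_le_right _ _))]
    exact h t (lt_of_lt_of_le ht (min_le_left _ _))
  piecewise_const := by
    intro t ht
    by_cases htρ : t < a.ρ
    · obtain ⟨ε, hε, h⟩ := a.piecewise_const t htρ
      refine ⟨min ε ((a.ρ - t) / 2), lt_min hε (by linarith), fun u hu1 hu2 _ => ?_⟩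
      have hu3 : u < a.ρ := by
        have := hu2.trans (add_le_add_right (min_le_right _ _) t)
        linarith
      show (if u < a.ρ then a.f u else if u < a.ρ + 1 then c else z) =
        (if t < a.ρ then a.f t else if t < a.ρ + 1 then c else z)
      rw [if_pos hu3, if_pos htρ]
      exact h u hu1 (hu2.trans (add_le_add_right (min_le_left _ _) t)) hu3
    · refine ⟨(a.ρ + 1 - t) / 2, by linarith, fun u hu1 hu2 _ => ?_⟩
      have h1 : ¬u < a.ρ := by push_neg at htρ ⊢; linarith
      have h2 : u < a.ρ + 1 := by linarith
      show (if u < a.ρ then a.f u else if u < a.ρ + 1 then c else z) =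
        (if t < a.ρ then a.f t else if t < a.ρ + 1 then c else z)
      rw [if_neg h1, if_pos h2, if_neg htρ, if_pos ht]

end UTree

/-- A subset of a metric space is (geodesically) convex if it contains every point
metrically between two of its points. -/
def MetricConvex {X : Type*} [MetricSpace X] (S : Set X) : Prop :=
  ∀ x ∈ S, ∀ y ∈ S, ∀ w, dist x w + dist w y = dist x y → w ∈ S

/-- `D` is a direction at `x`: a connected component of the complement of `{x}`. -/
def IsDirectionAt {X : Type*} [TopologicalSpace X] (x : X) (D : Set X) : Prop :=
  ∃ y, y ≠ x ∧ D = connectedComponentIn {w | w ≠ x} y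

/-- The valence of a space at a point: the number of connected components of the
complement of that point. -/
def valenceAt {X : Type*} [TopologicalSpace X] (x : X) : Cardinal :=
  Cardinal.mk {D : Set X // IsDirectionAt x D}

/-- A real tree: a geodesic metric space in which any two points are joined by a unique arc. -/
def IsRealTree (X : Type*) [MetricSpace X] : Prop :=
  (∀ x y : X, ∃ γ : ℝ → X, γ 0 = x ∧ γ (dist x y) = y ∧
      ∀ s ∈ Icc (0 : ℝ) (dist x y), ∀ t ∈ Icc (0 : ℝ) (dist x y),
        dist (γ s) (γ t) = |s - t|) ∧
  (∀ (x y : X) (γ₁ γ₂ : Path x y), Function.Injective γ₁ → Function.Injective γ₂ →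
      Set.range γ₁ = Set.range γ₂)

theorem cbDeriv_zero' {X : Type*} [TopologicalSpace X] (A : Set X) : cbDeriv A 0 = A :=
  cbDeriv_zero A

theorem cbStep_empty' {X : Type*} [TopologicalSpace X] : cbStep (∅ : Set X) = ∅ :=
  cbStep_empty

section CBLib
variable {X : Type*} {Y : Type*} [TopologicalSpace X] [TopologicalSpace Y]

theorem cbDeriv_succ' (A : Set X) (o : Ordinal) :
    cbDeriv A (o + 1) = cbStep (cbDeriv A o) := by
  rw [Ordinal.add_one_eq_succ, cbDeriv, Ordinal.limitRecOn_succ]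
  rfl

theorem cbDeriv_limit' (A : Set X) {o : Ordinal} (ho : Order.IsSuccLimit o) :
    cbDeriv A o = ⋂ (o' : Ordinal) (_ : o' < o), cbDeriv A o' := by
  rw [cbDeriv, Ordinal.limitRecOn_limit (h := ho)]
  rfl

theorem cbStep_subset (A : Set X) : cbStep A ⊆ A := fun _ h => h.1

theorem cbStep_mono {A B : Set X} (h : A ⊆ B) : cbStep A ⊆ cbStep B := by
  rintro x ⟨hx, hacc⟩
  exact ⟨h hx, hacc.mono (principal_mono.mpr h)⟩

theorem cbDeriv_mono {A B : Set X} (h : A ⊆ B) (o : Ordinal) :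
    cbDeriv A o ⊆ cbDeriv B o := by
  induction o using Ordinal.induction with
  | h o IH =>
    rcases Ordinal.zero_or_succ_or_isSuccLimit o with rfl | ⟨o', rfl⟩ | ho
    · rw [cbDeriv_zero', cbDeriv_zero']; exact h
    · rw [← Ordinal.add_one_eq_succ, cbDeriv_succ', cbDeriv_succ']
      exact cbStep_mono (IH o' (Order.lt_succ o'))
    · rw [cbDeriv_limit' _ ho, cbDeriv_limit' _ ho]
      exact iInter₂_mono fun o' ho' => IH o' ho'

theorem cbDeriv_antitone (A : Set X) {o o' : Ordinal} (h : o ≤ o') :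
    cbDeriv A o' ⊆ cbDeriv A o := by
  induction o' using Ordinal.induction with
  | h o' IH =>
    rcases eq_or_lt_of_le h with rfl | hlt
    · exact subset_rfl
    rcases Ordinal.zero_or_succ_or_isSuccLimit o' with rfl | ⟨o'', rfl⟩ | ho
    · exact absurd hlt (not_lt_of_ge zero_le)
    · rw [← Ordinal.add_one_eq_succ, cbDeriv_succ']
      exact (cbStep_subset _).trans (IH o'' (Order.lt_succ o'')
        (Order.lt_succ_iff.mp hlt))
    · rw [cbDeriv_limit' _ ho]
      exact iInter₂_subset o hlt

theorem cbDeriv_subset (A : Set X) (o : Ordinal) : cbDeriv A o ⊆ A := by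
  have := cbDeriv_antitone A (zero_le : (0:Ordinal) ≤ o)
  rwa [cbDeriv_zero'] at this

theorem cbStep_inter_open {A U : Set X} (hU : IsOpen U) :
    cbStep A ∩ U = cbStep (A ∩ U) ∩ U := by
  ext x
  simp only [mem_inter_iff, cbStep, mem_setOf_eq]
  constructor
  · rintro ⟨⟨hxA, hacc⟩, hxU⟩
    refine ⟨⟨⟨hxA, hxU⟩, ?_⟩, hxU⟩
    rw [accPt_iff_nhds] at hacc ⊢
    intro V hV
    obtain ⟨y, ⟨hyV, hyA⟩, hyx⟩ := hacc (V ∩ U) (inter_mem hV (hU.mem_nhds hxU))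
    exact ⟨y, ⟨hyV.1, hyA, hyV.2⟩, hyx⟩
  · rintro ⟨⟨⟨hxA, _⟩, hacc⟩, hxU⟩
    exact ⟨⟨hxA, hacc.mono (principal_mono.mpr inter_subset_left)⟩, hxU⟩

theorem cbDeriv_inter_open {A U : Set X} (hU : IsOpen U) (o : Ordinal) :
    cbDeriv A o ∩ U = cbDeriv (A ∩ U) o ∩ U := by
  induction o using Ordinal.induction with
  | h o IH =>
    rcases Ordinal.zero_or_succ_or_isSuccLimit o with rfl | ⟨o', rfl⟩ | ho
    · rw [cbDeriv_zero', cbDeriv_zero', inter_assoc, inter_self]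
    · rw [← Ordinal.add_one_eq_succ, cbDeriv_succ', cbDeriv_succ',
        cbStep_inter_open hU, cbStep_inter_open hU]
      rw [IH o' (Order.lt_succ o'), inter_assoc, inter_self, ← cbStep_inter_open hU]
    · rw [cbDeriv_limit' _ ho, cbDeriv_limit' _ ho]
      ext x
      simp only [mem_inter_iff, mem_iInter]
      constructor
      · rintro ⟨h1, h2⟩
        refine ⟨fun o' ho' => ?_, h2⟩
        have := IH o' ho'
        have hx : x ∈ cbDeriv A o' ∩ U := ⟨h1 o' ho', h2⟩
        rw [this] at hx
        exact hx.1
      · rintro ⟨h1, h2⟩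
        refine ⟨fun o' ho' => ?_, h2⟩
        have := (IH o' ho').symm
        have hx : x ∈ cbDeriv (A ∩ U) o' ∩ U := ⟨h1 o' ho', h2⟩
        rw [this] at hx
        exact hx.1

theorem cbStep_singleton (x : X) : cbStep ({x} : Set X) = ∅ := by
  ext y
  simp only [cbStep, mem_setOf_eq, mem_singleton_iff, mem_empty_iff_false, iff_false, not_and]
  rintro rfl
  rw [accPt_iff_nhds]
  push_neg
  exact ⟨univ, univ_mem, fun z hz => hz.2⟩


theorem cbDeriv_stab {A : Set X} {γ : Ordinal} (h : cbDeriv A (γ + 1) = cbDeriv A γ)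
    {o : Ordinal} (ho : γ ≤ o) : cbDeriv A o = cbDeriv A γ := by
  induction o using Ordinal.induction with
  | h o IH =>
    rcases eq_or_lt_of_le ho with rfl | hlt
    · rfl
    rcases Ordinal.zero_or_succ_or_isSuccLimit o with rfl | ⟨o', rfl⟩ | hlim
    · exact absurd hlt (not_lt_of_ge zero_le)
    · rw [← Ordinal.add_one_eq_succ, cbDeriv_succ',
        IH o' (Order.lt_succ o') (Order.lt_succ_iff.mp hlt), ← cbDeriv_succ', h]
    · rw [cbDeriv_limit' _ hlim]
      apply subset_antisymm
      · exact iInter₂_subset γ hlt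
      · intro x hx
        simp only [mem_iInter]
        intro o' ho'
        rcases le_or_gt o' γ with h1 | h1
        · exact cbDeriv_antitone A h1 hx
        · rw [IH o' ho' h1.le]; exact hx

theorem cbRank_le_of_empty {A : Set X} {o : Ordinal} (h : cbDeriv A o = ∅) :
    cbRank A ≤ o := by
  refine csInf_le' ?_
  show cbDeriv A (o + 1) = cbDeriv A o
  rw [h]
  have : cbDeriv A (o + 1) ⊆ cbDeriv A o := cbDeriv_antitone A (le_of_lt (by
    rw [Ordinal.add_one_eq_succ]; exact Order.lt_succ o))
  rw [h] at this
  exact subset_empty_iff.mp this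

theorem cbRank_eq_of_singleton {A : Set X} {δ : Ordinal} {x : X}
    (h1 : cbDeriv A δ = {x}) (h2 : cbDeriv A (δ + 1) = ∅) : cbRank A = δ + 1 := by
  refine le_antisymm (cbRank_le_of_empty h2) ?_
  refine le_csInf ⟨δ + 1, ?_⟩ ?_
  · show cbDeriv A (δ + 1 + 1) = cbDeriv A (δ + 1)
    rw [h2, cbDeriv_succ', h2, cbStep_empty']
  · intro γ hγ
    by_contra hcon
    push_neg at hcon
    have hγδ : γ ≤ δ := Order.lt_succ_iff.mp (by rwa [← Ordinal.add_one_eq_succ])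
    have e1 : cbDeriv A δ = cbDeriv A γ := cbDeriv_stab hγ hγδ
    have e2 : cbDeriv A (δ + 1) = cbDeriv A γ := cbDeriv_stab hγ (hγδ.trans (le_of_lt (by
      rw [Ordinal.add_one_eq_succ]; exact Order.lt_succ δ)))
    rw [h1] at e1; rw [h2] at e2
    rw [← e2] at e1
    exact (singleton_ne_empty x) e1

theorem cbStep_image (e : X ≃ₜ Y) (A : Set X) : cbStep (e '' A) = e '' cbStep A := by
  ext y
  simp only [cbStep, mem_image, mem_setOf_eq]
  constructor
  · rintro ⟨⟨x, hxA, rfl⟩, hacc⟩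
    refine ⟨x, ⟨hxA, ?_⟩, rfl⟩
    rw [accPt_iff_nhds] at hacc ⊢
    intro U hU
    obtain ⟨z, ⟨hz1, hz2⟩, hz3⟩ := hacc (e '' U)
      (e.isOpenMap.image_mem_nhds hU)
    obtain ⟨w, hwA, rfl⟩ := hz2
    obtain ⟨w', hw'U, hw'⟩ := hz1
    refine ⟨w, ⟨?_, hwA⟩, fun hc => hz3 (by rw [hc])⟩
    rwa [← e.injective hw']
  · rintro ⟨x, ⟨hxA, hacc⟩, rfl⟩
    refine ⟨⟨x, hxA, rfl⟩, ?_⟩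
    rw [accPt_iff_nhds] at hacc ⊢
    intro U hU
    obtain ⟨z, ⟨hz1, hz2⟩, hz3⟩ := hacc (e ⁻¹' U) (e.continuous.continuousAt hU)
    exact ⟨e z, ⟨hz1, ⟨z, hz2, rfl⟩⟩, fun hc => hz3 (e.injective hc)⟩

theorem cbDeriv_image (e : X ≃ₜ Y) (A : Set X) (o : Ordinal) :
    cbDeriv (e '' A) o = e '' cbDeriv A o := by
  induction o using Ordinal.induction with
  | h o IH =>
    rcases Ordinal.zero_or_succ_or_isSuccLimit o with rfl | ⟨o', rfl⟩ | hlim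
    · rw [cbDeriv_zero', cbDeriv_zero']
    · rw [← Ordinal.add_one_eq_succ, cbDeriv_succ', cbDeriv_succ',
        IH o' (Order.lt_succ o'), cbStep_image]
    · rw [cbDeriv_limit' _ hlim, cbDeriv_limit' _ hlim]
      have : ∀ o' : Ordinal, e '' (⋂ (_ : o' < o), cbDeriv A o')
          = ⋂ (_ : o' < o), e '' cbDeriv A o' := by
        intro o'
        exact image_iInter e.bijective _
      rw [image_iInter e.bijective]
      exact iInter_congr fun o' => by
        rw [this o']
        exact iInter_congr fun ho' => IH o' ho'

theorem accPt_principal_of_seq {x : ℝ} {S : Set ℝ}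
    (h : ∀ ε > (0:ℝ), ∃ y ∈ S, y ≠ x ∧ |y - x| < ε) : AccPt x (𝓟 S) := by
  rw [accPt_iff_nhds]
  intro U hU
  obtain ⟨ε, hε, hball⟩ := Metric.mem_nhds_iff.mp hU
  obtain ⟨y, hyS, hyx, hyd⟩ := h ε hε
  exact ⟨y, ⟨hball (by simpa [Real.dist_eq] using hyd), hyS⟩, hyx⟩

theorem accPt_of_closure [T1Space X] {x : X} {S : Set X} (h : AccPt x (𝓟 (closure S))) :
    AccPt x (𝓟 S) := by
  rw [accPt_iff_nhds] at h ⊢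
  intro U hU
  obtain ⟨V, hVU, hVopen, hxV⟩ := mem_nhds_iff.mp hU
  obtain ⟨y, ⟨hyV, hyc⟩, hyx⟩ := h V (hVopen.mem_nhds hxV)
  have : (V \ {x}) ∩ S ≠ ∅ := by
    have hopen : IsOpen (V \ {x}) := hVopen.sdiff isClosed_singleton
    have hyin : y ∈ V \ {x} := ⟨hyV, hyx⟩
    intro hcon
    have := mem_closure_iff.mp hyc (V \ {x}) hopen hyin
    rw [hcon] at this
    exact (Set.not_nonempty_empty) this
  obtain ⟨z, ⟨⟨hzV, hzx⟩, hzS⟩⟩ := nonempty_iff_ne_empty.mpr this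
  exact ⟨z, ⟨hVU hzV, hzS⟩, hzx⟩

end CBLib


def bad (U : Set ℝ) : Set ℝ :=
  {t | ∀ ε > 0, (∃ s ∈ Icc (t - ε) t, s ∈ U) ∧ ∃ s ∈ Icc (t - ε) t, s ∉ U}

def Pu (U : Set ℝ) : Set ℝ := closure (bad U)

def Good (δ : Ordinal) (U : Set ℝ) : Prop :=
  U ⊆ Ioo (1/2 : ℝ) 1 ∧
  (∀ t : ℝ, ∃ ε > 0, ∀ s, t ≤ s → s ≤ t + ε → (s ∈ U ↔ t ∈ U)) ∧
  Pu U ⊆ Ioc (1/2 : ℝ) 1 ∧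
  (1 : ℝ) ∈ bad U ∧
  cbDeriv (Pu U) δ = {1} ∧
  cbDeriv (Pu U) (δ + 1) = ∅

theorem bad_subset_Pu (U : Set ℝ) : bad U ⊆ Pu U := subset_closure

namespace Base

def xseq (m : ℕ) : ℝ := 1 - 1 / (m + 3)

lemma xseq_lt_one (m : ℕ) : xseq m < 1 := by
  have h : (0:ℝ) < 1 / ((m:ℝ) + 3) := by positivity
  simp only [xseq]
  linarith

lemma xseq_mono : StrictMono xseq := by
  apply strictMono_nat_of_lt_succ
  intro m
  simp only [xseq]
  have h1 : (0:ℝ) < (m:ℝ) + 3 := by positivity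
  have h2 : ((m:ℝ) + 3) < ((m:ℕ) + 1 : ℕ) + 3 := by push_cast; linarith
  have := one_div_lt_one_div_of_lt h1 h2
  linarith

lemma xseq_zero : xseq 0 = 2/3 := by
  simp only [xseq]; norm_num

lemma xseq_ge (m : ℕ) : 2/3 ≤ xseq m := by
  rw [← xseq_zero]; exact xseq_mono.monotone (Nat.zero_le m)

lemma exists_xseq_gt {y : ℝ} (hy : y < 1) : ∃ m, y < xseq m := by
  obtain ⟨m, hm⟩ := exists_nat_gt (1 / (1 - y))
  refine ⟨m, ?_⟩
  have h1 : (0:ℝ) < 1 - y := by linarith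
  have h2 : (1:ℝ) / (1 - y) < (m:ℝ) + 3 := by linarith [Nat.cast_nonneg (α := ℝ) m]
  have h3 : (1:ℝ) < (1 - y) * ((m:ℝ) + 3) := by
    have := (div_lt_iff₀ h1).mp h2
    linarith [this]
  have h4 : 1 / ((m:ℝ) + 3) < 1 - y := by
    rw [div_lt_iff₀ (by positivity)]
    linarith [h3]
  simp only [xseq]
  linarith

def U0 : Set ℝ := ⋃ i : ℕ, Ico (xseq (2*i)) (xseq (2*i+1))

lemma mem_U0_lb {s : ℝ} (hs : s ∈ U0) : xseq 0 ≤ s := by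
  obtain ⟨i, hi⟩ := mem_iUnion.mp hs
  exact (xseq_mono.monotone (Nat.zero_le (2*i))).trans hi.1

lemma mem_U0_ub {s : ℝ} (hs : s ∈ U0) : s < 1 := by
  obtain ⟨i, hi⟩ := mem_iUnion.mp hs
  exact hi.2.trans (xseq_lt_one _)

lemma mem_window {m : ℕ} {s : ℝ} (h1 : xseq m ≤ s) (h2 : s < xseq (m+1)) :
    s ∈ U0 ↔ Even m := by
  constructor
  · intro hs
    obtain ⟨i, hi⟩ := mem_iUnion.mp hs
    have heq : 2*i = m := by
      by_contra hne
      rcases lt_or_gt_of_ne hne with hlt | hgt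
      · have hle : 2*i + 1 ≤ m := hlt
        have : xseq (2*i+1) ≤ xseq m := xseq_mono.monotone hle
        linarith [hi.2]
      · have hle : m + 1 ≤ 2*i := hgt
        have : xseq (m+1) ≤ xseq (2*i) := xseq_mono.monotone hle
        linarith [hi.1]
    rw [← heq]
    exact even_two_mul i
  · intro hm
    obtain ⟨i, hi⟩ := hm
    have heq : m = 2*i := by omega
    subst heq
    exact mem_iUnion.mpr ⟨i, h1, h2⟩

lemma find_window {y : ℝ} (h0 : xseq 0 ≤ y) (h1 : y < 1) :
    ∃ m, xseq m ≤ y ∧ y < xseq (m+1) := by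
  classical
  have hex : ∃ m, y < xseq m := exists_xseq_gt h1
  have hjspec : y < xseq (Nat.find hex) := Nat.find_spec hex
  have hjpos : Nat.find hex ≠ 0 := by
    intro h
    rw [h] at hjspec
    exact absurd hjspec (not_lt.mpr h0)
  obtain ⟨m, hm⟩ := Nat.exists_eq_succ_of_ne_zero hjpos
  refine ⟨m, ?_, ?_⟩
  · have := Nat.find_min hex (m := m) (by omega)
    exact not_lt.mp this
  · rw [← Nat.succ_eq_add_one, ← hm]; exact hjspec

lemma U0_subset : U0 ⊆ Ioo (1/2 : ℝ) 1 := by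
  intro s hs
  have := mem_U0_lb hs
  rw [xseq_zero] at this
  exact ⟨by linarith, mem_U0_ub hs⟩

lemma U0_pw : ∀ t : ℝ, ∃ ε > 0, ∀ s, t ≤ s → s ≤ t + ε → (s ∈ U0 ↔ t ∈ U0) := by
  intro t
  rcases lt_or_ge t (xseq 0) with hlt | hge
  · refine ⟨(xseq 0 - t)/2, by linarith, fun s hs1 hs2 => ?_⟩
    have hsn : s ∉ U0 := fun h => by linarith [mem_U0_lb h]
    have htn : t ∉ U0 := fun h => by linarith [mem_U0_lb h]
    simp [hsn, htn]
  rcases lt_or_ge t 1 with hlt1 | hge1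
  · obtain ⟨m, hm1, hm2⟩ := find_window hge hlt1
    refine ⟨(xseq (m+1) - t)/2, by linarith, fun s hs1 hs2 => ?_⟩
    rw [mem_window (hm1.trans hs1) (by linarith), mem_window hm1 hm2]
  · refine ⟨1, one_pos, fun s hs1 hs2 => ?_⟩
    have hsn : s ∉ U0 := fun h => by linarith [mem_U0_ub h]
    have htn : t ∉ U0 := fun h => by linarith [mem_U0_ub h]
    simp [hsn, htn]

lemma xseq_mem_U0_iff (m : ℕ) : xseq m ∈ U0 ↔ Even m :=
  mem_window le_rfl (xseq_mono (Nat.lt_succ_self m))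

lemma one_mem_bad0 : (1:ℝ) ∈ bad U0 := by
  intro ε hε
  constructor
  · obtain ⟨m, hm⟩ := exists_xseq_gt (show (1:ℝ) - ε < 1 by linarith)
    refine ⟨xseq (2*m), ⟨?_, (xseq_lt_one _).le⟩, ?_⟩
    · have : xseq m ≤ xseq (2*m) := xseq_mono.monotone (by omega)
      linarith
    · rw [xseq_mem_U0_iff]; exact even_two_mul m
  · exact ⟨1, ⟨by linarith, le_rfl⟩, fun h => absurd (mem_U0_ub h) (lt_irrefl 1)⟩

lemma xseq_mem_bad0 (m : ℕ) : xseq m ∈ bad U0 := by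
  intro ε hε
  match m with
  | 0 =>
    constructor
    · refine ⟨xseq 0, ⟨by linarith, le_rfl⟩, ?_⟩
      rw [xseq_mem_U0_iff]; exact Even.zero
    · refine ⟨xseq 0 - min ε 1 / 2, ⟨?_, ?_⟩, ?_⟩
      · have : min ε 1 ≤ ε := min_le_left _ _
        linarith
      · have : (0:ℝ) < min ε 1 := lt_min hε one_pos
        linarith
      · intro h
        have h1 := mem_U0_lb h
        have : (0:ℝ) < min ε 1 := lt_min hε one_pos
        linarith
  | Nat.succ k =>
    have hk1 : xseq k < xseq (k+1) := xseq_mono (Nat.lt_succ_self k)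
    set s : ℝ := max (xseq k) (xseq (k+1) - ε) with hs
    have hs1 : xseq k ≤ s := le_max_left _ _
    have hs2 : s < xseq (k+1) := max_lt hk1 (by linarith)
    have hsmem : s ∈ U0 ↔ Even k := mem_window hs1 hs2
    have htmem : xseq (k+1) ∈ U0 ↔ Even (k+1) := xseq_mem_U0_iff (k+1)
    have hsIcc : s ∈ Icc (xseq (k+1) - ε) (xseq (k+1)) :=
      ⟨le_max_right _ _, le_of_lt (lt_of_lt_of_le hs2 le_rfl)⟩
    have htIcc : xseq (k+1) ∈ Icc (xseq (k+1) - ε) (xseq (k+1)) := ⟨by linarith, le_rfl⟩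
    rcases Nat.even_or_odd k with hek | hok
    · exact ⟨⟨s, hsIcc, hsmem.mpr hek⟩,
        ⟨xseq (k+1), htIcc, fun h => (Nat.even_add_one.mp (htmem.mp h)) hek⟩⟩
    · refine ⟨⟨xseq (k+1), htIcc, htmem.mpr (Nat.even_add_one.mpr (Nat.not_even_iff_odd.mpr hok))⟩,
        ⟨s, hsIcc, fun h => (Nat.not_even_iff_odd.mpr hok) (hsmem.mp h)⟩⟩

def S0 : Set ℝ := Set.range xseq ∪ {1}

lemma bad0_subset : bad U0 ⊆ S0 := by
  intro t ht
  by_contra htS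
  have ht1 : t ≠ 1 := fun h => htS (Or.inr h)
  rcases lt_or_gt_of_ne ht1 with hlt | hgt
  · rcases lt_or_ge t (xseq 0) with h0 | h0
    · obtain ⟨⟨s, hsI, hsU⟩, -⟩ := ht (xseq 0 - t) (by linarith)
      linarith [mem_U0_lb hsU, hsI.2]
    · obtain ⟨m, hm1, hm2⟩ := find_window h0 hlt
      have hne : t ≠ xseq m := fun h => htS (Or.inl ⟨m, h.symm⟩)
      have hmlt : xseq m < t := lt_of_le_of_ne hm1 (Ne.symm hne)
      obtain ⟨⟨s1, hs1I, hs1U⟩, ⟨s2, hs2I, hs2U⟩⟩ := ht (t - xseq m) (by linarith)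
      have hw1 : s1 ∈ U0 ↔ Even m := mem_window (by linarith [hs1I.1]) (by linarith [hs1I.2])
      have hw2 : s2 ∈ U0 ↔ Even m := mem_window (by linarith [hs2I.1]) (by linarith [hs2I.2])
      exact hs2U (hw2.mpr (hw1.mp hs1U))
  · obtain ⟨⟨s, hsI, hsU⟩, -⟩ := ht ((t - 1)/2) (by linarith)
    have := mem_U0_ub hsU
    have := hsI.1
    linarith

lemma S0_closed : IsClosed S0 := by
  rw [← closure_subset_iff_isClosed]
  intro y hy
  by_contra hyS
  have hy1 : y ≠ 1 := fun h => hyS (Or.inr h)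
  have key : ∀ ρ > (0:ℝ), ∃ z ∈ S0, |y - z| < ρ := by
    intro ρ hρ
    obtain ⟨z, hz, hd⟩ := Metric.mem_closure_iff.mp hy ρ hρ
    exact ⟨z, hz, by rwa [Real.dist_eq] at hd⟩
  rcases lt_or_gt_of_ne hy1 with hlt | hgt
  · rcases lt_or_ge y (xseq 0) with h0 | h0
    · obtain ⟨z, hz, hd⟩ := key (xseq 0 - y) (by linarith)
      have hzge : xseq 0 ≤ z := by
        rcases hz with ⟨m, rfl⟩ | hz1
        · exact xseq_mono.monotone (Nat.zero_le m)
        · rw [mem_singleton_iff] at hz1; rw [hz1]; linarith [xseq_lt_one 0]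
      rw [abs_lt] at hd
      linarith [hd.1]
    · obtain ⟨m, hm1, hm2⟩ := find_window h0 hlt
      have hne : y ≠ xseq m := fun h => hyS (Or.inl ⟨m, h.symm⟩)
      have hmlt : xseq m < y := lt_of_le_of_ne hm1 (Ne.symm hne)
      obtain ⟨z, hz, hd⟩ := key (min (y - xseq m) (xseq (m+1) - y))
        (lt_min (by linarith) (by linarith))
      rw [abs_lt] at hd
      have hmin1 : min (y - xseq m) (xseq (m+1) - y) ≤ y - xseq m := min_le_left _ _
      have hmin2 : min (y - xseq m) (xseq (m+1) - y) ≤ xseq (m+1) - y := min_le_right _ _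
      rcases hz with ⟨k, rfl⟩ | hz1
      · rcases le_or_gt k m with hk | hk
        · have : xseq k ≤ xseq m := xseq_mono.monotone hk
          linarith [hd.2]
        · have : xseq (m+1) ≤ xseq k := xseq_mono.monotone hk
          linarith [hd.1]
      · rw [mem_singleton_iff] at hz1
        subst hz1
        have := xseq_lt_one (m+1)
        linarith [hd.1]
  · obtain ⟨z, hz, hd⟩ := key (y - 1) (by linarith)
    have hzle : z ≤ 1 := by
      rcases hz with ⟨m, rfl⟩ | hz1
      · exact (xseq_lt_one m).le
      · rw [mem_singleton_iff] at hz1; rw [hz1]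
    rw [abs_lt] at hd
    linarith [hd.1]


lemma Pu0_subset_S0 : Pu U0 ⊆ S0 := closure_minimal bad0_subset S0_closed

lemma Pu0_subset : Pu U0 ⊆ Ioc (1/2 : ℝ) 1 := by
  intro y hy
  rcases Pu0_subset_S0 hy with ⟨m, rfl⟩ | h1
  · exact ⟨by linarith [xseq_ge m], (xseq_lt_one m).le⟩
  · rw [mem_singleton_iff] at h1; subst h1; norm_num

lemma one_mem_Pu0 : (1:ℝ) ∈ Pu U0 := bad_subset_Pu _ one_mem_bad0

lemma accPt_one_Pu0 : AccPt (1:ℝ) (𝓟 (Pu U0)) := by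
  apply accPt_principal_of_seq
  intro ε hε
  obtain ⟨m, hm⟩ := exists_xseq_gt (show (1:ℝ) - ε < 1 by linarith)
  refine ⟨xseq m, bad_subset_Pu _ (xseq_mem_bad0 m), (xseq_lt_one m).ne, ?_⟩
  rw [abs_lt]
  constructor
  · linarith [xseq_lt_one m]
  · linarith [xseq_lt_one m]

lemma not_accPt_xseq (m : ℕ) : ¬ AccPt (xseq m) (𝓟 S0) := by
  intro hacc
  rw [accPt_iff_nhds] at hacc
  have hup : xseq m < xseq (m+1) := xseq_mono (Nat.lt_succ_self m)
  obtain ⟨L, hL1, hL2⟩ : ∃ L, L < xseq m ∧ ∀ z ∈ S0, z < xseq m → z ≤ L := by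
    match m with
    | 0 => exact ⟨xseq 0 - 1, by linarith, fun z hz hzlt => by
        exfalso
        rcases hz with ⟨k, rfl⟩ | hz
        · exact absurd hzlt (not_lt.mpr (xseq_mono.monotone (Nat.zero_le k)))
        · rw [mem_singleton_iff] at hz; subst hz; linarith [xseq_lt_one 0]⟩
    | Nat.succ k => exact ⟨xseq k, xseq_mono (Nat.lt_succ_self k), fun z hz hzlt => by
        rcases hz with ⟨j, rfl⟩ | hz
        · have : j < k+1 := by
            by_contra h
            exact absurd hzlt (not_lt.mpr (xseq_mono.monotone (not_lt.mp h)))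
          exact xseq_mono.monotone (by omega)
        · rw [mem_singleton_iff] at hz; subst hz; linarith [xseq_lt_one (k+1)]⟩
  obtain ⟨z, ⟨hzb, hzS⟩, hzne⟩ := hacc (Metric.ball (xseq m) (min (xseq (m+1) - xseq m) (xseq m - L)))
    (Metric.ball_mem_nhds _ (lt_min (by linarith) (by linarith)))
  rw [Metric.mem_ball, Real.dist_eq, abs_lt] at hzb
  have hmin1 : min (xseq (m+1) - xseq m) (xseq m - L) ≤ xseq (m+1) - xseq m := min_le_left _ _
  have hmin2 : min (xseq (m+1) - xseq m) (xseq m - L) ≤ xseq m - L := min_le_right _ _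
  rcases lt_trichotomy z (xseq m) with hlt | heq | hgt
  · have := hL2 z hzS hlt
    linarith [hzb.1]
  · exact hzne heq
  · have : xseq (m+1) ≤ z := by
      rcases hzS with ⟨j, rfl⟩ | hz
      · have hmj : m < j := by
          by_contra h
          exact absurd hgt (not_lt.mpr (xseq_mono.monotone (not_lt.mp h)))
        exact xseq_mono.monotone hmj
      · rw [mem_singleton_iff] at hz; subst hz; exact (xseq_lt_one (m+1)).le
    linarith [hzb.2]

lemma cbDeriv_Pu0_one : cbDeriv (Pu U0) 1 = {1} := by
  have h1 : (1 : Ordinal) = 0 + 1 := (zero_add 1).symm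
  rw [h1, cbDeriv_succ', cbDeriv_zero']
  apply subset_antisymm
  · rintro y ⟨hyP, hyacc⟩
    rcases Pu0_subset_S0 hyP with ⟨m, rfl⟩ | h1'
    · exact absurd (hyacc.mono (principal_mono.mpr Pu0_subset_S0)) (not_accPt_xseq m)
    · exact h1'
  · rintro y hy
    rw [mem_singleton_iff] at hy; subst hy
    exact ⟨one_mem_Pu0, accPt_one_Pu0⟩

lemma base_good : Good 1 U0 := by
  refine ⟨U0_subset, U0_pw, Pu0_subset, one_mem_bad0, cbDeriv_Pu0_one, ?_⟩
  rw [cbDeriv_succ', cbDeriv_Pu0_one, cbStep_singleton]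

end Base


lemma Good.sub {δ : Ordinal} {U : Set ℝ} (h : Good δ U) : U ⊆ Ioo (1/2:ℝ) 1 := h.1
lemma Good.pw {δ : Ordinal} {U : Set ℝ} (h : Good δ U) :
    ∀ t : ℝ, ∃ ε > 0, ∀ s, t ≤ s → s ≤ t + ε → (s ∈ U ↔ t ∈ U) := h.2.1
lemma Good.Pu_sub {δ : Ordinal} {U : Set ℝ} (h : Good δ U) : Pu U ⊆ Ioc (1/2:ℝ) 1 := h.2.2.1
lemma Good.one_bad {δ : Ordinal} {U : Set ℝ} (h : Good δ U) : (1:ℝ) ∈ bad U := h.2.2.2.1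
lemma Good.deriv {δ : Ordinal} {U : Set ℝ} (h : Good δ U) : cbDeriv (Pu U) δ = {1} := h.2.2.2.2.1
lemma Good.derivS {δ : Ordinal} {U : Set ℝ} (h : Good δ U) : cbDeriv (Pu U) (δ+1) = ∅ := h.2.2.2.2.2
lemma Good.bad_sub {δ : Ordinal} {U : Set ℝ} (h : Good δ U) : bad U ⊆ Ioc (1/2:ℝ) 1 :=
  (bad_subset_Pu U).trans h.Pu_sub

namespace Comb

def cseq (n : ℕ) : ℝ := 1 - (1/2)^(n+1)

def rseq (n : ℕ) : ℝ := (1/2)^(n+3)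

def φm (n : ℕ) : ℝ ≃ₜ ℝ :=
  (Homeomorph.mulLeft₀ ((1/2:ℝ)^(n+3)) (by positivity)).trans
    (Homeomorph.addLeft (cseq n))

lemma φm_apply (n : ℕ) (x : ℝ) : φm n x = cseq n + rseq n * x := by
  simp [φm, rseq, Homeomorph.trans_apply, add_comm]

def ψm (n : ℕ) (s : ℝ) : ℝ := (s - cseq n) / rseq n

lemma pow_half_pos (k : ℕ) : (0:ℝ) < (1/2)^k := by positivity

lemma rseq_pos (n : ℕ) : 0 < rseq n := pow_half_pos _

lemma pow_half_lt {k l : ℕ} (h : k < l) : ((1:ℝ)/2)^l < (1/2)^k :=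
  pow_lt_pow_right_of_lt_one₀ (by norm_num) (by norm_num) h

lemma pow_half_le {k l : ℕ} (h : k ≤ l) : ((1:ℝ)/2)^l ≤ (1/2)^k :=
  pow_le_pow_of_le_one (by norm_num) (by norm_num) h

lemma cseq_mono : StrictMono cseq := by
  apply strictMono_nat_of_lt_succ
  intro n
  simp only [cseq]
  have := pow_half_lt (show n+1 < n+1+1 by omega)
  linarith

lemma cseq_lt_one (n : ℕ) : cseq n < 1 := by
  simp only [cseq]; linarith [pow_half_pos (n+1)]

lemma cseq_zero : cseq 0 = 1/2 := by norm_num [cseq]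

lemma cseq_ge (n : ℕ) : 1/2 ≤ cseq n := by
  rw [← cseq_zero]; exact cseq_mono.monotone (Nat.zero_le n)

lemma cstep (n : ℕ) : cseq (n+1) = cseq n + (1/2)^(n+2) := by
  simp only [cseq]
  have h : ((1:ℝ)/2)^(n+1) = (1/2)^(n+2) * 2 := by
    rw [show n+2 = (n+1)+1 by omega, pow_succ]
    ring
  rw [h]; ring

lemma cr_lt (n : ℕ) : cseq n + rseq n < cseq (n+1) := by
  rw [cstep]
  have := pow_half_lt (show n+2 < n+3 by omega)
  simp only [rseq]
  linarith

lemma crn_lt_c {m n : ℕ} (h : m < n) : cseq m + rseq m < cseq n :=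
  (cr_lt m).trans_le (cseq_mono.monotone h)

lemma crn_le_c {m n : ℕ} (h : m < n) : cseq m + rseq m ≤ cseq n := (crn_lt_c h).le

lemma chalf_mono {n m : ℕ} (h : n ≤ m) : cseq n + rseq n / 2 ≤ cseq m + rseq m / 2 := by
  rcases eq_or_lt_of_le h with rfl | h
  · exact le_rfl
  · have h1 := crn_le_c h
    have h2 := rseq_pos n
    have h3 := rseq_pos m
    linarith

lemma lb916 (n : ℕ) : 9/16 ≤ cseq n + rseq n / 2 := by
  have := chalf_mono (Nat.zero_le n)
  have h0 : cseq 0 + rseq 0 / 2 = 9/16 := by norm_num [cseq, rseq]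
  linarith

lemma exists_cseq_gt {ε : ℝ} (hε : 0 < ε) : ∃ N, ∀ n, N ≤ n → 1 - ε < cseq n := by
  obtain ⟨N, hN⟩ := exists_pow_lt_of_lt_one hε (show (1:ℝ)/2 < 1 by norm_num)
  refine ⟨N, fun n hn => ?_⟩
  simp only [cseq]
  have : ((1:ℝ)/2)^(n+1) ≤ (1/2)^N := pow_half_le (by omega)
  linarith

lemma φψ (n : ℕ) (s : ℝ) : φm n (ψm n s) = s := by
  have hr := (rseq_pos n).ne'
  rw [φm_apply]
  simp only [ψm]
  field_simp
  ring

lemma ψφ (n : ℕ) (x : ℝ) : ψm n (φm n x) = x := by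
  have hr := (rseq_pos n).ne'
  rw [φm_apply]
  simp only [ψm]
  field_simp
  ring

lemma ψ_sub (n : ℕ) (s t : ℝ) : ψm n s - ψm n t = (s - t) / rseq n := by
  simp only [ψm]; ring

lemma find_cwindow {y : ℝ} (h0 : 1/2 ≤ y) (h1 : y < 1) :
    ∃ n, cseq n ≤ y ∧ y < cseq (n+1) := by
  classical
  have hex : ∃ n, y < cseq n := by
    obtain ⟨N, hN⟩ := exists_cseq_gt (show (0:ℝ) < 1 - y by linarith)
    exact ⟨N, by linarith [hN N le_rfl]⟩
  have hjspec : y < cseq (Nat.find hex) := Nat.find_spec hex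
  have hjpos : Nat.find hex ≠ 0 := by
    intro h
    rw [h, cseq_zero] at hjspec
    linarith
  obtain ⟨m, hm⟩ := Nat.exists_eq_succ_of_ne_zero hjpos
  refine ⟨m, ?_, ?_⟩
  · have := Nat.find_min hex (m := m) (by omega)
    exact not_lt.mp this
  · rw [← Nat.succ_eq_add_one, ← hm]; exact hjspec

def newU (Useq : ℕ → Set ℝ) : Set ℝ := ⋃ n, φm n '' Useq n

section WithU

variable {Useq : ℕ → Set ℝ} {δseq : ℕ → Ordinal}

lemma img_bound' {A : Set ℝ} (hA : A ⊆ Ioc (1/2:ℝ) 1) {n : ℕ} {s : ℝ}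
    (hs : s ∈ φm n '' A) : cseq n + rseq n / 2 < s ∧ s ≤ cseq n + rseq n := by
  obtain ⟨x, hx, rfl⟩ := hs
  obtain ⟨hx1, hx2⟩ := hA hx
  rw [φm_apply]
  have hr := rseq_pos n
  constructor
  · nlinarith
  · nlinarith

lemma mem_newU_of (hU : ∀ n, Good (δseq n) (Useq n)) {s : ℝ} (hs : s ∈ newU Useq) :
    ∃ m, cseq m + rseq m / 2 < s ∧ s ≤ cseq m + rseq m := by
  obtain ⟨m, hm⟩ := mem_iUnion.mp hs
  exact ⟨m, img_bound' ((hU m).sub.trans Ioo_subset_Ioc_self) hm⟩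

lemma newU_subset (hU : ∀ n, Good (δseq n) (Useq n)) : newU Useq ⊆ Ioo (1/2:ℝ) 1 := by
  intro s hs
  obtain ⟨m, h1, h2⟩ := mem_newU_of hU hs
  have := lb916 m
  have := cr_lt m
  have := cseq_lt_one (m+1)
  exact ⟨by linarith, by linarith⟩

lemma mem_newU_iff (hU : ∀ n, Good (δseq n) (Useq n)) {n : ℕ} {s : ℝ}
    (h1 : cseq n ≤ s) (h2 : s ≤ cseq (n+1)) :
    s ∈ newU Useq ↔ ψm n s ∈ Useq n := by
  constructor
  · intro hs
    obtain ⟨m, hm⟩ := mem_iUnion.mp hs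
    have hb := img_bound' ((hU m).sub.trans Ioo_subset_Ioc_self) hm
    have hmn : m = n := by
      by_contra hne
      rcases lt_or_gt_of_ne hne with hlt | hgt
      · have := crn_lt_c hlt
        linarith [hb.2]
      · have h3 : cseq (n+1) ≤ cseq m := cseq_mono.monotone hgt
        have := rseq_pos m
        linarith [hb.1]
    subst hmn
    obtain ⟨x, hx, hxe⟩ := hm
    rw [← hxe, ψφ]
    exact hx
  · intro hs
    apply mem_iUnion.mpr ⟨n, ?_⟩
    exact ⟨ψm n s, hs, φψ n s⟩

lemma newU_pw (hU : ∀ n, Good (δseq n) (Useq n)) :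
    ∀ t : ℝ, ∃ ε > 0, ∀ s, t ≤ s → s ≤ t + ε → (s ∈ newU Useq ↔ t ∈ newU Useq) := by
  intro t
  rcases lt_or_ge t (1/2 : ℝ) with hlt | hge
  · refine ⟨(1/2 - t)/2, by linarith, fun s hs1 hs2 => ?_⟩
    have hsn : s ∉ newU Useq := fun h => by
      have := (newU_subset hU h).1; linarith
    have htn : t ∉ newU Useq := fun h => by
      have := (newU_subset hU h).1; linarith
    simp [hsn, htn]
  rcases lt_or_ge t 1 with hlt1 | hge1
  · obtain ⟨n, hn1, hn2⟩ := find_cwindow hge hlt1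
    obtain ⟨ε', hε', hprop⟩ := (hU n).pw (ψm n t)
    have hr := rseq_pos n
    refine ⟨min (rseq n * ε') ((cseq (n+1) - t)/2),
      lt_min (by positivity) (by linarith), fun s hs1 hs2 => ?_⟩
    have hs3 : s ≤ cseq (n+1) := by
      have := min_le_right (rseq n * ε') ((cseq (n+1) - t)/2)
      linarith
    have hs4 : ψm n s - ψm n t = (s - t)/rseq n := ψ_sub n s t
    have hs5 : ψm n t ≤ ψm n s := by
      have h0 : 0 ≤ (s - t)/rseq n := div_nonneg (by linarith) hr.le
      linarith [hs4, h0]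
    have hs6 : ψm n s ≤ ψm n t + ε' := by
      have hmin := min_le_left (rseq n * ε') ((cseq (n+1) - t)/2)
      have h7 : s - t ≤ rseq n * ε' := by linarith
      have h8 : (s - t)/rseq n ≤ ε' := by
        rw [div_le_iff₀ hr]; linarith
      linarith
    rw [mem_newU_iff hU (hn1.trans hs1) hs3, mem_newU_iff hU hn1 hn2.le]
    exact hprop (ψm n s) hs5 hs6
  · refine ⟨1, one_pos, fun s hs1 hs2 => ?_⟩
    have hsn : s ∉ newU Useq := fun h => by
      have := (newU_subset hU h).2; linarith
    have htn : t ∉ newU Useq := fun h => by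
      have := (newU_subset hU h).2; linarith
    simp [hsn, htn]


lemma img_boundo {A : Set ℝ} (hA : A ⊆ Ioo (1/2:ℝ) 1) {n : ℕ} {s : ℝ}
    (hs : s ∈ φm n '' A) : cseq n + rseq n / 2 < s ∧ s < cseq n + rseq n := by
  obtain ⟨x, hx, rfl⟩ := hs
  obtain ⟨hx1, hx2⟩ := hA hx
  rw [φm_apply]
  have hr := rseq_pos n
  constructor
  · nlinarith
  · nlinarith

lemma mem_newU_of' (hU : ∀ n, Good (δseq n) (Useq n)) {s : ℝ} (hs : s ∈ newU Useq) :
    ∃ m, cseq m + rseq m / 2 < s ∧ s < cseq m + rseq m := by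
  obtain ⟨m, hm⟩ := mem_iUnion.mp hs
  exact ⟨m, img_boundo (hU m).sub hm⟩

lemma badphi (hU : ∀ n, Good (δseq n) (Useq n)) {n : ℕ} {x : ℝ} (hx : x ∈ bad (Useq n)) :
    φm n x ∈ bad (newU Useq) := by
  obtain ⟨hx1, hx2⟩ := (hU n).bad_sub hx
  have hr := rseq_pos n
  have ht1 : cseq n + rseq n / 2 < φm n x := by rw [φm_apply]; nlinarith
  have ht2 : φm n x ≤ cseq n + rseq n := by rw [φm_apply]; nlinarith
  intro ε hε
  set ε'' : ℝ := min (ε / rseq n) (1/2) with hd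
  have hε''pos : 0 < ε'' := lt_min (by positivity) (by norm_num)
  have h5 : rseq n * ε'' ≤ ε := by
    have hh : ε'' ≤ ε / rseq n := min_le_left _ _
    rw [le_div_iff₀ hr] at hh
    linarith
  have h6 : rseq n * ε'' ≤ rseq n / 2 := by
    have hh : ε'' ≤ 1/2 := min_le_right _ _
    nlinarith
  obtain ⟨⟨s1, hs1I, hs1U⟩, ⟨s2, hs2I, hs2U⟩⟩ := hx ε'' hε''pos
  have key : ∀ s', s' ∈ Icc (x - ε'') x → (φm n s' ∈ Icc (φm n x - ε) (φm n x) ∧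
      (φm n s' ∈ newU Useq ↔ s' ∈ Useq n)) := by
    intro s' hs'
    have h1 : φm n x - φm n s' = rseq n * (x - s') := by rw [φm_apply, φm_apply]; ring
    have h2 : x - s' ≤ ε'' := by linarith [hs'.1]
    have h3 : 0 ≤ x - s' := by linarith [hs'.2]
    have h4 : rseq n * (x - s') ≤ rseq n * ε'' := by nlinarith
    have h4' : 0 ≤ rseq n * (x - s') := by positivity
    have hIcc : φm n s' ∈ Icc (φm n x - ε) (φm n x) := ⟨by linarith, by linarith⟩
    refine ⟨hIcc, ?_⟩
    have hw1 : cseq n ≤ φm n s' := by linarith [hIcc.2]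
    have hw2 : φm n s' ≤ cseq (n+1) := by linarith [cr_lt n, hIcc.2]
    rw [mem_newU_iff hU hw1 hw2, ψφ]
  obtain ⟨hI1, hW1⟩ := key s1 hs1I
  obtain ⟨hI2, hW2⟩ := key s2 hs2I
  exact ⟨⟨φm n s1, hI1, hW1.mpr hs1U⟩, ⟨φm n s2, hI2, fun h => hs2U (hW2.mp h)⟩⟩

lemma one_mem_bad_new (hU : ∀ n, Good (δseq n) (Useq n)) : (1:ℝ) ∈ bad (newU Useq) := by
  intro ε hε
  constructor
  · obtain ⟨N, hN⟩ := exists_cseq_gt hε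
    obtain ⟨⟨s, hsI, hsU⟩, -⟩ := (hU N).one_bad 1 one_pos
    have hb := img_boundo (hU N).sub (mem_image_of_mem (φm N) hsU)
    refine ⟨φm N s, ⟨?_, ?_⟩, mem_iUnion.mpr ⟨N, mem_image_of_mem _ hsU⟩⟩
    · have := hN N le_rfl
      have := rseq_pos N
      linarith [hb.1]
    · linarith [hb.2, cr_lt N, cseq_lt_one (N+1)]
  · exact ⟨1, ⟨by linarith, le_rfl⟩, fun h => by
      have := (newU_subset hU h).2; linarith⟩

lemma bad_new_subset (hU : ∀ n, Good (δseq n) (Useq n)) :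
    bad (newU Useq) ⊆ {1} ∪ ⋃ n, φm n '' bad (Useq n) := by
  intro t ht
  rcases lt_trichotomy t 1 with hlt | heq | hgt
  case inr.inl => exact Or.inl heq
  case inr.inr =>
    exfalso
    obtain ⟨⟨s, hsI, hsU⟩, -⟩ := ht (t - 1) (by linarith)
    have := (newU_subset hU hsU).2
    linarith [hsI.1]
  rcases le_or_gt t (1/2:ℝ) with h12 | h12
  · exfalso
    obtain ⟨⟨s, hsI, hsU⟩, -⟩ := ht 1 one_pos
    have := (newU_subset hU hsU).1
    linarith [hsI.2]
  obtain ⟨n, hn1, hn2⟩ := find_cwindow h12.le hlt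
  have hr := rseq_pos n
  rcases le_or_gt t (cseq n + rseq n / 2) with hA | hB
  · exfalso
    match n, hn1, hn2, hA with
    | 0, hn1, hn2, hA =>
      obtain ⟨⟨s, hsI, hsU⟩, -⟩ := ht 1 one_pos
      obtain ⟨m, hm1, hm2⟩ := mem_newU_of' hU hsU
      have := chalf_mono (Nat.zero_le m)
      linarith [hsI.2]
    | (k+1), hn1, hn2, hA =>
      have hck : cseq k + rseq k < cseq (k+1) := cr_lt k
      obtain ⟨⟨s, hsI, hsU⟩, -⟩ := ht (t - (cseq k + rseq k)) (by linarith)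
      obtain ⟨m, hm1, hm2⟩ := mem_newU_of' hU hsU
      rcases le_or_gt m k with hmk | hmk
      · have h1 : cseq m + rseq m ≤ cseq k + rseq k := by
          rcases eq_or_lt_of_le hmk with rfl | h
          · exact le_rfl
          · linarith [crn_lt_c h, rseq_pos k]
        linarith [hsI.1, hm2]
      · have h1 : cseq (k+1) + rseq (k+1) / 2 ≤ cseq m + rseq m / 2 := chalf_mono hmk
        linarith [hsI.2, hm1]
  · right
    refine mem_iUnion.mpr ⟨n, ⟨ψm n t, ?_, φψ n t⟩⟩
    intro ε' hε'
    set ε'' := min ε' (1/2 : ℝ) with hd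
    have hε'' : 0 < ε'' := lt_min hε' (by norm_num)
    obtain ⟨⟨s1, hs1I, hs1U⟩, ⟨s2, hs2I, hs2U⟩⟩ := ht (rseq n * ε'') (by positivity)
    have key : ∀ s', s' ∈ Icc (t - rseq n * ε'') t →
        (ψm n s' ∈ Icc (ψm n t - ε') (ψm n t) ∧ (s' ∈ newU Useq ↔ ψm n s' ∈ Useq n)) := by
      intro s' hs'
      have h2 : ε'' ≤ 1/2 := min_le_right _ _
      have h2' : ε'' ≤ ε' := min_le_left _ _
      have h6 : rseq n * ε'' ≤ rseq n / 2 := by nlinarith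
      have hw1 : cseq n ≤ s' := by linarith [hs'.1]
      have hw2 : s' ≤ cseq (n+1) := le_trans hs'.2 hn2.le
      have hψ : ψm n t - ψm n s' = (t - s')/rseq n := ψ_sub n t s'
      have h3 : 0 ≤ t - s' := by linarith [hs'.2]
      have h4 : t - s' ≤ rseq n * ε'' := by linarith [hs'.1]
      have h5 : (t - s')/rseq n ≤ ε'' := by rw [div_le_iff₀ hr]; linarith
      have h7 : 0 ≤ (t - s')/rseq n := div_nonneg h3 hr.le
      exact ⟨⟨by linarith, by linarith⟩, mem_newU_iff hU hw1 hw2⟩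
    obtain ⟨hI1, hW1⟩ := key s1 hs1I
    obtain ⟨hI2, hW2⟩ := key s2 hs2I
    exact ⟨⟨ψm n s1, hI1, hW1.mp hs1U⟩, ⟨ψm n s2, hI2, fun h => hs2U (hW2.mpr h)⟩⟩

lemma bad_new_lb (hU : ∀ n, Good (δseq n) (Useq n)) :
    bad (newU Useq) ⊆ Icc (9/16 : ℝ) 1 := by
  intro t ht
  rcases bad_new_subset hU ht with h1 | h1
  · rw [mem_singleton_iff] at h1; subst h1
    exact ⟨by norm_num, le_rfl⟩
  · obtain ⟨n, hn⟩ := mem_iUnion.mp h1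
    have hb := img_bound' (hU n).bad_sub hn
    exact ⟨by linarith [lb916 n, hb.1], by linarith [hb.2, cr_lt n, cseq_lt_one (n+1)]⟩

lemma Pu_new_Icc (hU : ∀ n, Good (δseq n) (Useq n)) :
    Pu (newU Useq) ⊆ Icc (9/16:ℝ) 1 :=
  closure_minimal (bad_new_lb hU) isClosed_Icc

def winV : ℕ → Set ℝ
  | 0 => Ioo (1/4 : ℝ) (cseq 1)
  | (k+1) => Ioo (cseq k + rseq k) (cseq (k+2))

lemma winV_open (n : ℕ) : IsOpen (winV n) := by cases n <;> exact isOpen_Ioo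

lemma mem_winV {n : ℕ} {y : ℝ} (h1 : cseq n ≤ y) (h2 : y < cseq (n+1)) : y ∈ winV n := by
  cases n with
  | zero =>
    have := cseq_zero
    exact ⟨by rw [cseq_zero] at h1; linarith, h2⟩
  | succ k =>
    exact ⟨lt_of_lt_of_le (crn_lt_c (Nat.lt_succ_self k)) h1, h2⟩

lemma mem_winV_img {A : Set ℝ} (hA : A ⊆ Ioc (1/2:ℝ) 1) {n : ℕ} {y : ℝ}
    (hy : y ∈ φm n '' A) : y ∈ winV n := by
  have hb := img_bound' hA hy
  cases n with
  | zero =>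
    refine ⟨?_, ?_⟩
    · have := lb916 0; linarith [hb.1]
    · exact lt_of_le_of_lt hb.2 (cr_lt 0)
  | succ k =>
    refine ⟨?_, ?_⟩
    · have h3 : cseq k + rseq k < cseq (k+1) := cr_lt k
      linarith [hb.1, rseq_pos (k+1)]
    · exact lt_of_le_of_lt hb.2 (cr_lt (k+1))

lemma window_inter {A : ℕ → Set ℝ} (hA : ∀ m, A m ⊆ Ioc (1/2:ℝ) 1) (n : ℕ) :
    ({1} ∪ ⋃ m, φm m '' A m) ∩ winV n ⊆ φm n '' A n := by
  rintro y ⟨h1 | h1, hV⟩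
  · rw [mem_singleton_iff] at h1; subst h1
    exfalso
    cases n with
    | zero => exact absurd hV.2 (not_lt.mpr (cseq_lt_one 1).le)
    | succ k => exact absurd hV.2 (not_lt.mpr (cseq_lt_one (k+2)).le)
  · obtain ⟨m, hm⟩ := mem_iUnion.mp h1
    have hb := img_bound' (hA m) hm
    have hmn : m = n := by
      by_contra hne
      rcases lt_or_gt_of_ne hne with hlt | hgt
      · cases n with
        | zero => exact Nat.not_lt_zero m hlt
        | succ k =>
          have h2 : cseq m + rseq m ≤ cseq k + rseq k := by
            rcases Nat.lt_succ_iff_lt_or_eq.mp hlt with h | h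
            · linarith [crn_lt_c h, rseq_pos k]
            · subst h; exact le_rfl
          exact absurd hV.1 (not_lt.mpr (by linarith [hb.2]))
      · have h2 : cseq (n+1) ≤ cseq m := cseq_mono.monotone hgt
        have hup : y < cseq (n+1) := by
          cases n with
          | zero => exact hV.2
          | succ k => exact hV.2
        linarith [hb.1, rseq_pos m]
    subst hmn
    exact hm

lemma Pu_new_subset (hU : ∀ n, Good (δseq n) (Useq n)) :
    Pu (newU Useq) ⊆ {1} ∪ ⋃ n, φm n '' Pu (Useq n) := by
  intro y hy
  have hyI := Pu_new_Icc hU hy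
  rcases eq_or_lt_of_le hyI.2 with h1 | h1
  · exact Or.inl h1
  obtain ⟨n, hn1, hn2⟩ := find_cwindow (by linarith [hyI.1] : (1/2:ℝ) ≤ y) h1
  right
  have hV : y ∈ winV n := mem_winV hn1 hn2
  have hloc : y ∈ closure (winV n ∩ bad (newU Useq)) :=
    (winV_open n).inter_closure ⟨hV, hy⟩
  have hss : winV n ∩ bad (newU Useq) ⊆ φm n '' bad (Useq n) := by
    rintro z ⟨hz2, hz1⟩
    exact window_inter (fun m => (hU m).bad_sub) n ⟨bad_new_subset hU hz1, hz2⟩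
  have h2 : y ∈ closure (φm n '' bad (Useq n)) := closure_mono hss hloc
  rw [← Homeomorph.image_closure] at h2
  exact mem_iUnion.mpr ⟨n, h2⟩

lemma Tn_subset (hU : ∀ n, Good (δseq n) (Useq n)) (n : ℕ) :
    φm n '' Pu (Useq n) ⊆ Pu (newU Useq) := by
  have h1 : φm n '' Pu (Useq n) = closure (φm n '' bad (Useq n)) :=
    Homeomorph.image_closure _ _
  rw [h1]
  exact closure_mono (fun z hz => by
    obtain ⟨x, hx, rfl⟩ := hz
    exact badphi hU hx)

lemma deriv_top (hU : ∀ n, Good (δseq n) (Useq n)) {Δ : Ordinal}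
    (hΔ1 : ∀ n, δseq n + 1 ≤ Δ) (hΔ2 : ∀ o, o < Δ → {n | o ≤ δseq n}.Infinite) :
    cbDeriv (Pu (newU Useq)) Δ = {1} := by
  have hone : ∀ o, o ≤ Δ → (1:ℝ) ∈ cbDeriv (Pu (newU Useq)) o := by
    intro o
    induction o using Ordinal.induction with
    | h o IH =>
      intro hoΔ
      rcases Ordinal.zero_or_succ_or_isSuccLimit o with rfl | ⟨o', rfl⟩ | hlim
      · rw [cbDeriv_zero']
        exact bad_subset_Pu _ (one_mem_bad_new hU)
      · rw [← Ordinal.add_one_eq_succ, cbDeriv_succ']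
        have ho' : o' < Δ := lt_of_lt_of_le (Order.lt_succ o') hoΔ
        refine ⟨IH o' (Order.lt_succ o') ho'.le, ?_⟩
        apply accPt_principal_of_seq
        intro ε hε
        obtain ⟨N, hN⟩ := exists_cseq_gt hε
        obtain ⟨n, hn1, hn2⟩ := (hΔ2 o' ho').exists_gt N
        have h1 : (1:ℝ) ∈ cbDeriv (Pu (Useq n)) o' := by
          apply cbDeriv_antitone _ hn1
          rw [(hU n).deriv]
          exact mem_singleton _
        refine ⟨φm n 1, ?_, ?_, ?_⟩
        · have h2 : φm n 1 ∈ φm n '' cbDeriv (Pu (Useq n)) o' := mem_image_of_mem _ h1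
          rw [← cbDeriv_image] at h2
          exact cbDeriv_mono (Tn_subset hU n) o' h2
        · rw [φm_apply, mul_one]
          have h3 := cr_lt n
          have h4 := cseq_lt_one (n+1)
          exact ne_of_lt (by linarith)
        · rw [φm_apply, mul_one, abs_lt]
          have h3 := hN n (by omega)
          have h4 := rseq_pos n
          have h5 := cr_lt n
          have h6 := cseq_lt_one (n+1)
          constructor
          · linarith
          · linarith
      · rw [cbDeriv_limit' _ hlim]
        exact mem_iInter.mpr fun o' => mem_iInter.mpr fun ho' =>
          IH o' ho' (le_of_lt (lt_of_lt_of_le ho' hoΔ))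
  apply subset_antisymm
  · intro y hy
    have hyP : y ∈ Pu (newU Useq) := cbDeriv_subset _ _ hy
    rcases Pu_new_subset hU hyP with h1 | h1
    · exact h1
    exfalso
    obtain ⟨n, hn⟩ := mem_iUnion.mp h1
    have hyV : y ∈ winV n := mem_winV_img (hU n).Pu_sub hn
    have hloc : y ∈ cbDeriv (Pu (newU Useq) ∩ winV n) Δ := by
      have heq := cbDeriv_inter_open (A := Pu (newU Useq)) (winV_open n) Δ
      have hy2 : y ∈ cbDeriv (Pu (newU Useq)) Δ ∩ winV n := ⟨hy, hyV⟩
      rw [heq] at hy2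
      exact hy2.1
    have hss : Pu (newU Useq) ∩ winV n ⊆ φm n '' Pu (Useq n) := by
      rintro z ⟨hz1, hz2⟩
      exact window_inter (fun m => (hU m).Pu_sub) n ⟨Pu_new_subset hU hz1, hz2⟩
    have h2 : y ∈ cbDeriv (φm n '' Pu (Useq n)) Δ := cbDeriv_mono hss Δ hloc
    rw [cbDeriv_image] at h2
    obtain ⟨x, hx, rfl⟩ := h2
    have h3 : x ∈ cbDeriv (Pu (Useq n)) (δseq n + 1) := cbDeriv_antitone _ (hΔ1 n) hx
    rw [(hU n).derivS] at h3
    exact notMem_empty x h3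
  · intro y hy
    rw [mem_singleton_iff] at hy; subst hy
    exact hone Δ le_rfl

theorem combine (hU : ∀ n, Good (δseq n) (Useq n)) {Δ : Ordinal}
    (hΔ1 : ∀ n, δseq n + 1 ≤ Δ) (hΔ2 : ∀ o, o < Δ → {n | o ≤ δseq n}.Infinite) :
    Good Δ (newU Useq) := by
  refine ⟨newU_subset hU, newU_pw hU, ?_, one_mem_bad_new hU, deriv_top hU hΔ1 hΔ2, ?_⟩
  · intro y hy
    have h := Pu_new_Icc hU hy
    exact ⟨by linarith [h.1], h.2⟩
  · rw [cbDeriv_succ', deriv_top hU hΔ1 hΔ2, cbStep_singleton]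

end WithU

end Comb


theorem exists_good : ∀ δ : Ordinal, 1 ≤ δ → δ.card ≤ Cardinal.aleph0 → ∃ U, Good δ U := by
  intro δ
  induction δ using Ordinal.induction with
  | h δ IH =>
    intro h1 hc
    rcases Ordinal.zero_or_succ_or_isSuccLimit δ with rfl | ⟨δ₀, rfl⟩ | hlim
    · exact absurd h1 (by simp)
    · rcases eq_or_ne δ₀ 0 with rfl | hδ₀
      · refine ⟨Base.U0, ?_⟩
        have : Order.succ (0 : Ordinal) = 1 := by
          rw [← Ordinal.add_one_eq_succ, zero_add]
        rw [this]
        exact Base.base_good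
      · have h1' : 1 ≤ δ₀ := Ordinal.one_le_iff_ne_zero.mpr hδ₀
        have hc' : δ₀.card ≤ Cardinal.aleph0 :=
          le_trans (Ordinal.card_le_card (Order.lt_succ δ₀).le) hc
        obtain ⟨U, hU⟩ := IH δ₀ (Order.lt_succ δ₀) h1' hc'
        refine ⟨Comb.newU (fun _ => U), ?_⟩
        refine Comb.combine (δseq := fun _ => δ₀) (fun _ => hU) ?_ ?_
        · intro n
          rw [Ordinal.add_one_eq_succ]
        · intro o ho
          have hoδ : o ≤ δ₀ := Order.lt_succ_iff.mp ho
          exact Set.infinite_of_injective_forall_mem (f := fun n : ℕ => n)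
            (fun a b h => h) (fun n => hoδ)
    · -- limit case
      have hcount : Countable (Iio δ) := by
        rw [← Cardinal.mk_le_aleph0_iff, Ordinal.mk_Iio_ordinal]
        calc Cardinal.lift δ.card ≤ Cardinal.lift Cardinal.aleph0 :=
              Cardinal.lift_le.mpr hc
          _ = Cardinal.aleph0 := Cardinal.lift_aleph0
      have hne : Nonempty (Iio δ) := ⟨⟨0, hlim.pos⟩⟩
      obtain ⟨g, hg⟩ := exists_surjective_nat (Iio δ)
      have hlt : ∀ n : ℕ, ((g n : Ordinal) + 1) < δ := by
        intro n
        rw [Ordinal.add_one_eq_succ]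
        exact hlim.succ_lt (g n).2
      have hch : ∀ n : ℕ, ∃ U, Good ((g n : Ordinal) + 1) U := by
        intro n
        refine IH _ (hlt n) ?_ ?_
        · calc (1 : Ordinal) = 0 + 1 := (zero_add 1).symm
            _ ≤ (g n : Ordinal) + 1 := add_le_add_left zero_le 1
        · exact le_trans (Ordinal.card_le_card (hlt n).le) hc
      choose Useq hUseq using hch
      refine ⟨Comb.newU Useq, ?_⟩
      refine Comb.combine hUseq ?_ ?_
      · intro n
        rw [Ordinal.add_one_eq_succ]
        exact (hlim.succ_lt (hlt n)).le
      · intro o ho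
        have hoak : ∀ k : ℕ, o + (k : Ordinal) < δ := by
          intro k
          induction k with
          | zero => simpa using ho
          | succ k IHk =>
            have : ((k+1 : ℕ) : Ordinal) = (k : Ordinal) + 1 := by push_cast; rfl
            rw [this, ← add_assoc, Ordinal.add_one_eq_succ]
            exact hlim.succ_lt IHk
        have hF : ∀ k : ℕ, ∃ n : ℕ, (g n : Ordinal) = o + (k : Ordinal) := by
          intro k
          obtain ⟨n, hn⟩ := hg ⟨o + (k : Ordinal), hoak k⟩
          exact ⟨n, by rw [hn]⟩
        choose F hFspec using hF
        refine Set.infinite_of_injective_forall_mem (f := F) ?_ ?_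
        · intro a b hab
          have : (g (F a) : Ordinal) = (g (F b) : Ordinal) := by rw [hab]
          rw [hFspec a, hFspec b] at this
          have := add_left_cancel this
          exact_mod_cast this
        · intro k
          show o ≤ (g (F k) : Ordinal) + 1
          rw [hFspec k]
          calc o ≤ o + (k : Ordinal) := le_add_right le_rfl
            _ ≤ o + (k : Ordinal) + 1 := by
              rw [Ordinal.add_one_eq_succ]
              exact (Order.lt_succ _).le


lemma one_mem_closure_diff {U : Set ℝ} {δ : Ordinal} (hG : Good δ U) (hδ : 1 ≤ δ) :
    (1:ℝ) ∈ closure (bad U \ {1}) := by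
  have h1 : (1:ℝ) ∈ cbDeriv (Pu U) 1 := by
    apply cbDeriv_antitone _ hδ
    rw [hG.deriv]
    exact mem_singleton _
  rw [show (1:Ordinal) = 0+1 from (zero_add 1).symm, cbDeriv_succ', cbDeriv_zero'] at h1
  have hacc : AccPt (1:ℝ) (𝓟 (bad U)) := accPt_of_closure h1.2
  rw [accPt_iff_nhds] at hacc
  rw [mem_closure_iff_nhds]
  intro V hV
  obtain ⟨y, ⟨hyV, hyb⟩, hyne⟩ := hacc V hV
  exact ⟨y, hyV, hyb, hyne⟩

lemma closure_bad_diff {U : Set ℝ} {δ : Ordinal} (hG : Good δ U) (hδ : 1 ≤ δ) :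
    closure (bad U \ {1}) = Pu U := by
  apply subset_antisymm (closure_mono diff_subset)
  have h2 : bad U ⊆ (bad U \ {1}) ∪ {1} := fun x hx => by
    by_cases h : x = 1
    · exact Or.inr h
    · exact Or.inl ⟨hx, h⟩
  refine (closure_mono h2).trans ?_
  rw [closure_union, closure_singleton]
  exact union_subset subset_rfl (singleton_subset_iff.mpr (one_mem_closure_diff hG hδ))

section Application

open Classical

variable {C : Type} (z c : C)

noncomputable def mkTree (U : Set ℝ) {δ : Ordinal} (hG : Good δ U) : UTree C z where
  ρ := 1
  f := fun t => if t ∈ U then c else z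
  apply_eq_of_ge := fun t ht => if_neg (fun h => absurd (hG.sub h).2 (not_lt.mpr ht))
  eventually_zero := ⟨1/2, by norm_num, fun t ht =>
    if_neg (fun h => absurd (hG.sub h).1 (not_lt.mpr ht.le))⟩
  piecewise_const := fun t ht => by
    obtain ⟨ε, hε, hprop⟩ := hG.pw t
    refine ⟨ε, hε, fun u hu1 hu2 _ => ?_⟩
    have hiff := hprop u hu1 hu2
    show (if u ∈ U then c else z) = (if t ∈ U then c else z)
    by_cases h : t ∈ U
    · rw [if_pos (hiff.mpr h), if_pos h]
    · rw [if_neg (fun hu => h (hiff.mp hu)), if_neg h]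

variable {z c}

lemma badSet_of_ite (hcz : c ≠ z) {U : Set ℝ} (W : UTree C z)
    (hWf : ∀ t, t < W.ρ → W.f t = (if t ∈ U then c else z)) :
    UTree.badSet W = bad U ∩ Iio W.ρ := by
  ext t
  simp only [UTree.badSet, mem_setOf_eq, mem_inter_iff, mem_Iio]
  constructor
  · rintro ⟨htρ, hvar⟩
    refine ⟨fun ε hε => ?_, htρ⟩
    obtain ⟨u, huI, v, hvI, huv⟩ := hvar ε hε
    have hu : W.f u = if u ∈ U then c else z := hWf u (lt_of_le_of_lt huI.2 htρ)
    have hv : W.f v = if v ∈ U then c else z := hWf v (lt_of_le_of_lt hvI.2 htρ)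
    by_cases h1 : u ∈ U <;> by_cases h2 : v ∈ U
    · rw [hu, hv, if_pos h1, if_pos h2] at huv; exact absurd rfl huv
    · exact ⟨⟨u, huI, h1⟩, ⟨v, hvI, h2⟩⟩
    · exact ⟨⟨v, hvI, h2⟩, ⟨u, huI, h1⟩⟩
    · rw [hu, hv, if_neg h1, if_neg h2] at huv; exact absurd rfl huv
  · rintro ⟨hb, htρ⟩
    refine ⟨htρ, fun ε hε => ?_⟩
    obtain ⟨⟨s1, hs1I, hs1U⟩, ⟨s2, hs2I, hs2U⟩⟩ := hb ε hε
    refine ⟨s1, hs1I, s2, hs2I, ?_⟩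
    rw [hWf s1 (lt_of_le_of_lt hs1I.2 htρ), hWf s2 (lt_of_le_of_lt hs2I.2 htρ),
      if_pos hs1U, if_neg hs2U]
    exact hcz

lemma comp_mkTree (hcz : c ≠ z) {U : Set ℝ} {δ : Ordinal} (hG : Good δ U) (hδ : 1 ≤ δ) :
    UTree.comp (mkTree z c U hG) = δ + 1 := by
  have hbs : UTree.badSet (mkTree z c U hG) = bad U ∩ Iio 1 :=
    badSet_of_ite hcz _ (fun t _ => rfl)
  have hdiff : bad U ∩ Iio (1:ℝ) = bad U \ {1} := by
    ext x
    simp only [mem_inter_iff, mem_Iio, mem_diff, mem_singleton_iff]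
    constructor
    · rintro ⟨h1, h2⟩; exact ⟨h1, ne_of_lt h2⟩
    · rintro ⟨h1, h2⟩; exact ⟨h1, lt_of_le_of_ne (hG.bad_sub h1).2 h2⟩
  have hPset : UTree.Pset (mkTree z c U hG) = Pu U := by
    rw [UTree.Pset, hbs, hdiff]
    exact closure_bad_diff hG hδ
  rw [UTree.comp, hPset]
  exact cbRank_eq_of_singleton hG.deriv hG.derivS

lemma comp_restrict_le (hcz : c ≠ z) {U : Set ℝ} {δ : Ordinal} (hG : Good δ U)
    {s : ℝ} (hs : s ≤ (mkTree z c U hG).ρ) (hs1 : s < 1) :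
    UTree.comp ((mkTree z c U hG).restrict s hs) ≤ δ := by
  have hbs : UTree.badSet ((mkTree z c U hG).restrict s hs) = bad U ∩ Iio s := by
    have h := badSet_of_ite (U := U) hcz ((mkTree z c U hG).restrict s hs) (fun t ht => by
      show (if t < s then (mkTree z c U hG).f t else z) = _
      rw [if_pos (show t < s from ht)]
      rfl)
    exact h
  have hPsub : UTree.Pset ((mkTree z c U hG).restrict s hs) ⊆ Pu U ∩ Iic s := by
    rw [UTree.Pset, hbs]
    apply closure_minimal ?_ (IsClosed.inter isClosed_closure isClosed_Iic)
    exact fun x hx => ⟨bad_subset_Pu _ hx.1, mem_Iic.mpr (le_of_lt (mem_Iio.mp hx.2))⟩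
  have hderiv : cbDeriv (UTree.Pset ((mkTree z c U hG).restrict s hs)) δ = ∅ := by
    rw [eq_empty_iff_forall_notMem]
    intro y hy
    have h1 : y ∈ cbDeriv (Pu U) δ :=
      cbDeriv_mono (hPsub.trans inter_subset_left) δ hy
    rw [hG.deriv, mem_singleton_iff] at h1
    subst h1
    have h2 : (1:ℝ) ∈ Pu U ∩ Iic s := hPsub (cbDeriv_subset _ _ hy)
    have := h2.2
    rw [mem_Iic] at this
    linarith
  rw [UTree.comp]
  exact cbRank_le_of_empty hderiv

lemma wedge_restrict {U : Set ℝ} {δ : Ordinal} (hG : Good δ U)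
    {s : ℝ} (hs : s ≤ (mkTree z c U hG).ρ) :
    UTree.wedgeρ ((mkTree z c U hG).restrict s hs) (mkTree z c U hG) = s := by
  apply le_antisymm
  · exact (UTree.wedgeρ_le_min _ _).trans (min_le_left _ _)
  · apply UTree.le_wedgeρ
    refine ⟨le_min le_rfl hs, fun u hu => ?_⟩
    show (if u < s then (mkTree z c U hG).f u else z) = (mkTree z c U hG).f u
    exact if_pos hu

lemma dist_restrict {U : Set ℝ} {δ : Ordinal} (hG : Good δ U)
    {s : ℝ} (hs : s ≤ (mkTree z c U hG).ρ) :
    dist ((mkTree z c U hG).restrict s hs) (mkTree z c U hG) = 1 - s := by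
  rw [UTree.dist_def, wedge_restrict hG hs]
  show s + 1 - 2 * s = 1 - s
  ring

end Application

/-- `T_κ^{[α]}` is incomplete: there is a Cauchy sequence in `T_κ^{[α]}` whose limit in
`T_κ` has complexity `α + 1`, hence lies outside `T_κ^{[α]}`. -/
theorem stmt16 (κ : Cardinal) (hκ : 3 ≤ κ) (C : Type) (z : C) (hC : IsLabelSet κ C)
    (α : Ordinal) (hα1 : 1 ≤ α) (hαc : IsCountableOrdinal α) :
    ¬CompleteSpace ↥(UTree.level z α) ∧
    ∃ (a : ℕ → UTree C z) (b : UTree C z), (∀ n, a n ∈ UTree.level z α) ∧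
      CauchySeq a ∧ Filter.Tendsto a Filter.atTop (nhds b) ∧
      UTree.comp b = α + 1 ∧ b ∉ UTree.level z α := by
  obtain ⟨c, hcz⟩ : ∃ y : C, y ≠ z := by
    rcases lt_or_ge κ Cardinal.aleph0 with hfin | hinf
    · by_contra hcon
      push_neg at hcon
      have hsub : Subsingleton C := ⟨fun a b => (hcon a).trans (hcon b).symm⟩
      have h1 : Cardinal.mk C ≤ 1 := Cardinal.le_one_iff_subsingleton.mpr hsub
      have h2 := hC.2 hfin
      have h3 : κ ≤ 2 := by
        calc κ = Cardinal.mk C + 1 := h2.symm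
          _ ≤ 1 + 1 := add_le_add_left h1 1
          _ = 2 := one_add_one_eq_two
      have h4 : (3:Cardinal) ≤ 2 := hκ.trans h3
      norm_num at h4
    · have h5 : Cardinal.aleph0 ≤ Cardinal.mk C := by rw [hC.1 hinf]; exact hinf
      have : Infinite C := Cardinal.infinite_iff.mpr h5
      exact exists_ne z
  obtain ⟨U, hG⟩ := exists_good α hα1 hαc
  have hsle : ∀ n : ℕ, (1 - 1/((n:ℝ)+1)) ≤ (mkTree z c U hG).ρ := by
    intro n
    show (1:ℝ) - 1/((n:ℝ)+1) ≤ 1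
    have : (0:ℝ) < 1/((n:ℝ)+1) := by positivity
    linarith
  have hslt : ∀ n : ℕ, (1 - 1/((n:ℝ)+1)) < 1 := by
    intro n
    have : (0:ℝ) < 1/((n:ℝ)+1) := by positivity
    linarith
  set b : UTree C z := mkTree z c U hG with hb
  set a : ℕ → UTree C z := fun n => b.restrict (1 - 1/((n:ℝ)+1)) (hsle n) with ha
  have hmem : ∀ n, a n ∈ UTree.level z α := fun n => comp_restrict_le hcz hG (hsle n) (hslt n)
  have hcompb : UTree.comp b = α + 1 := comp_mkTree hcz hG hα1
  have hdist : ∀ n : ℕ, dist (a n) b = 1/((n:ℝ)+1) := by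
    intro n
    show dist ((mkTree z c U hG).restrict (1 - 1/((n:ℝ)+1)) (hsle n)) (mkTree z c U hG)
      = 1/((n:ℝ)+1)
    rw [dist_restrict hG (hsle n)]
    ring
  have htend : Filter.Tendsto a Filter.atTop (nhds b) := by
    rw [tendsto_iff_dist_tendsto_zero]
    have heq : (fun n => dist (a n) b) = fun n : ℕ => 1/((n:ℝ)+1) := funext hdist
    rw [heq]
    exact tendsto_one_div_add_atTop_nhds_zero_nat
  have hcauchy : CauchySeq a := htend.cauchySeq
  have hbnot : b ∉ UTree.level z α := by
    intro h
    have h1 : UTree.comp b ≤ α := h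
    rw [hcompb, Ordinal.add_one_eq_succ] at h1
    exact absurd (Order.succ_le_iff.mp h1) (lt_irrefl α)
  refine ⟨?_, a, b, hmem, hcauchy, htend, hcompb, hbnot⟩
  intro hcomp
  have hsub : CauchySeq (fun n => (⟨a n, hmem n⟩ : ↥(UTree.level z α))) := by
    rw [Metric.cauchySeq_iff]
    have h := Metric.cauchySeq_iff.mp hcauchy
    simpa only [Subtype.dist_eq] using h
  obtain ⟨x, hx⟩ := cauchySeq_tendsto_of_complete hsub
  have hx2 : Filter.Tendsto a Filter.atTop (nhds (x : UTree C z)) :=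
    (continuous_subtype_val.tendsto x).comp hx
  have hbx : b = (x : UTree C z) := tendsto_nhds_unique htend hx2
  exact hbnot (hbx ▸ x.2)


end
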